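/- Let $n, q, j$ be integers with $2 \le q \le n$, $n \ge 3$, and $0 \le j < q$. Let $c > 0$ be any positive real constant, define $p(t) = 1 - q(q-1)t$, $y_j(t) = \binom{n-j}{q-j} p(t)^{\binom{q}{2} - \binom{j}{2}}$, $h(t) = \binom{n}{q} p(t)^{\binom{q}{2}}$, and for each $0 \le m < q$ define $\epsilon_m(t) = \binom{n-m}{q-m}\, c\, p(t)^{-\binom{m}{2} - 2\binom{q}{2}}$ (integer power of the positive real $p(t)$). Then for every real $t$ with $p(t) > 0$, $\binom{q}{2} \frac{y_j(t)\, \epsilon_2(t)}{h(t)} = \frac{\binom{q}{2}}{\binom{j}{2} + 2\binom{q}{2}} \cdot \frac{\epsilon_j'(t)}{n(n-1)} \le \frac{1}{2} \cdot \frac{\epsilon_j'(t)}{n(n-1)}$, where $\epsilon_j'$ denotes the derivative of $\epsilon_j$. -/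

import Mathlib

theorem natkey {n q : ℕ} (hq : 2 ≤ q) (hqn : q ≤ n) :
    n.choose q * (q * (q - 1)) = n * (n - 1) * ((n - 2).choose (q - 2)) := by
  obtain ⟨r, rfl⟩ := Nat.exists_eq_add_of_le hq
  obtain ⟨m, hm⟩ := Nat.exists_eq_add_of_le hqn
  subst hm
  simp only [Nat.add_sub_cancel_left, show 2 + r + m - 2 = r + m from by omega,
    show 2 + r - 1 = 1 + r from by omega, show 2 + r + m - 1 = 1 + r + m from by omega]
  have h1 := Nat.add_one_mul_choose_eq (1 + r + m) (1 + r)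
  have h2 := Nat.add_one_mul_choose_eq (r + m) r
  rw [show 1 + r + m + 1 = 2 + r + m from by omega, show 1 + r + 1 = 2 + r from by omega] at h1
  rw [show r + m + 1 = 1 + r + m from by omega, show r + 1 = 1 + r from by omega] at h2
  calc (2+r+m).choose (2+r) * ((2+r) * (1+r))
      = ((2+r+m).choose (2+r) * (2+r)) * (1+r) := by ring
    _ = ((2+r+m) * ((1+r+m).choose (1+r))) * (1+r) := by rw [← h1]
    _ = (2+r+m) * ((1+r+m).choose (1+r) * (1+r)) := by ring
    _ = (2+r+m) * ((1+r+m) * ((r+m).choose r)) := by rw [← h2]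
    _ = (2+r+m) * (1+r+m) * ((r+m).choose r) := by ring

set_option maxHeartbeats 1600000 in

/-- With `p(t) = 1 - q(q-1)t`, `y_j(t) = C(n-j,q-j) p(t)^(C(q,2)-C(j,2))`,
`h(t) = C(n,q) p(t)^C(q,2)` and `ε_m(t) = C(n-m,q-m) c p(t)^(-(C(m,2)+2C(q,2)))`,
for every `t` with `p(t) > 0` we have
`C(q,2) y_j(t) ε_2(t) / h(t) = (C(q,2)/(C(j,2)+2C(q,2))) ε_j'(t)/(n(n-1))
  ≤ (1/2) ε_j'(t)/(n(n-1))`. -/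
theorem stmt_15 {n q j : ℕ} (hq : 2 ≤ q) (hqn : q ≤ n) (hn3 : 3 ≤ n) (hj : j < q)
    (c : ℝ) (hc : 0 < c)
    (p yj h : ℝ → ℝ) (ε : ℕ → ℝ → ℝ)
    (hp : p = fun t => 1 - (q : ℝ) * ((q : ℝ) - 1) * t)
    (hyj : yj = fun t => ((n - j).choose (q - j) : ℝ) * p t ^ (q.choose 2 - j.choose 2))
    (hh : h = fun t => (n.choose q : ℝ) * p t ^ q.choose 2)
    (hε : ε = fun m t => ((n - m).choose (q - m) : ℝ) * c *
      p t ^ (-((m.choose 2 : ℤ) + 2 * (q.choose 2 : ℤ)))) :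
    ∀ t : ℝ, 0 < p t →
      (q.choose 2 : ℝ) * (yj t * ε 2 t) / h t
          = (q.choose 2 : ℝ) / ((j.choose 2 : ℝ) + 2 * (q.choose 2 : ℝ))
            * (deriv (ε j) t / ((n : ℝ) * ((n : ℝ) - 1))) ∧
        (q.choose 2 : ℝ) * (yj t * ε 2 t) / h t
          ≤ (1 / 2) * (deriv (ε j) t / ((n : ℝ) * ((n : ℝ) - 1))) := by
  subst hp hyj hh hε
  intro t ht
  simp only at ht ⊢
  set P : ℝ := 1 - (q : ℝ) * ((q : ℝ) - 1) * t with hPdef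
  have hP : P ≠ 0 := ne_of_gt ht
  set a : ℤ := (j.choose 2 : ℤ) + 2 * (q.choose 2 : ℤ) with ha
  -- derivative computation
  have hderiv : deriv (fun t : ℝ => ((n - j).choose (q - j) : ℝ) * c *
      (1 - (q : ℝ) * ((q : ℝ) - 1) * t) ^ (-a)) t
      = ((n - j).choose (q - j) : ℝ) * c * ((a : ℝ) * ((q : ℝ) * ((q : ℝ) - 1))) * P ^ (-a - 1) := by
    have hpd : HasDerivAt (fun t : ℝ => 1 - (q : ℝ) * ((q : ℝ) - 1) * t)
        (-((q : ℝ) * ((q : ℝ) - 1))) t := by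
      simpa using ((hasDerivAt_id t).const_mul ((q : ℝ) * ((q : ℝ) - 1))).const_sub 1
    have h2 := (((hasDerivAt_zpow (-a) P (Or.inl hP)).comp t hpd).const_mul
      (((n - j).choose (q - j) : ℝ) * c)).deriv
    simp only [Function.comp_def] at h2
    rw [h2]
    push_cast
    ring
  rw [hderiv]
  -- abbreviations
  have hQ1 : 1 ≤ q.choose 2 := Nat.choose_pos hq
  have hJQ : j.choose 2 ≤ q.choose 2 := Nat.choose_le_choose 2 hj.le
  have hQpos : (0:ℝ) < (q.choose 2 : ℝ) := by exact_mod_cast hQ1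
  -- casting nat powers to zpow
  have hnat1 : P ^ (q.choose 2 - j.choose 2) = P ^ ((q.choose 2 : ℤ) - (j.choose 2 : ℤ)) := by
    rw [← zpow_natCast]
    congr 1
    omega
  have hnat2 : P ^ (q.choose 2) = P ^ ((q.choose 2 : ℤ)) := (zpow_natCast P _).symm
  rw [hnat1, hnat2]
  -- choose 2 2 = 1
  have hc22 : ((2:ℕ).choose 2 : ℤ) = 1 := by norm_num
  rw [hc22]
  -- key binomial identity over ℝ
  have hkey : (n.choose q : ℝ) * ((q:ℝ) * ((q:ℝ)-1)) = (n:ℝ) * ((n:ℝ)-1) * ((n-2).choose (q-2) : ℝ) := by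
    have hk := natkey hq hqn
    have e1 : ((q - 1 : ℕ) : ℝ) = (q:ℝ) - 1 := by
      rw [Nat.cast_sub (by omega)]; norm_num
    have e2 : ((n - 1 : ℕ) : ℝ) = (n:ℝ) - 1 := by
      rw [Nat.cast_sub (by omega)]; norm_num
    rw [← e1, ← e2]
    exact_mod_cast congrArg (Nat.cast : ℕ → ℝ) hk
  -- power combining
  have hpow : P ^ ((q.choose 2:ℤ) - (j.choose 2:ℤ)) * P ^ (-(1 + 2*(q.choose 2:ℤ)))
      = P ^ ((q.choose 2:ℤ)) * P ^ (-a - 1) := by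
    rw [← zpow_add₀ hP, ← zpow_add₀ hP]
    congr 1
    simp only [ha]
    ring
  have hne2 : (n:ℝ) * ((n:ℝ) - 1) ≠ 0 := by
    have h1 : (3:ℝ) ≤ (n:ℝ) := by exact_mod_cast hn3
    nlinarith
  have hne3 : (n.choose q : ℝ) ≠ 0 := by
    have := Nat.choose_pos hqn
    positivity
  have hne4 : P ^ ((q.choose 2:ℤ)) ≠ 0 := zpow_ne_zero _ hP
  have hne1 : ((j.choose 2:ℝ) + 2 * (q.choose 2:ℝ)) ≠ 0 := by positivity
  have haR : (a : ℝ) = (j.choose 2:ℝ) + 2 * (q.choose 2:ℝ) := by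
    rw [ha]; push_cast; ring
  -- closed forms
  have hL : (q.choose 2 : ℝ) * (((n - j).choose (q - j) : ℝ) * P ^ ((q.choose 2:ℤ) - (j.choose 2:ℤ))
        * (((n - 2).choose (q - 2) : ℝ) * c * P ^ (-(1 + 2*(q.choose 2:ℤ)))))
        / ((n.choose q : ℝ) * P ^ ((q.choose 2:ℤ)))
      = (q.choose 2 : ℝ) * ((n - j).choose (q - j) : ℝ) * ((n - 2).choose (q - 2) : ℝ) * c
        / (n.choose q : ℝ) * P ^ (-a - 1) := by
    rw [div_eq_iff (mul_ne_zero hne3 hne4)]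
    calc (q.choose 2 : ℝ) * (((n - j).choose (q - j) : ℝ) * P ^ ((q.choose 2:ℤ) - (j.choose 2:ℤ))
          * (((n - 2).choose (q - 2) : ℝ) * c * P ^ (-(1 + 2*(q.choose 2:ℤ)))))
        = (q.choose 2 : ℝ) * ((n - j).choose (q - j) : ℝ) * ((n - 2).choose (q - 2) : ℝ) * c
          * (P ^ ((q.choose 2:ℤ) - (j.choose 2:ℤ)) * P ^ (-(1 + 2*(q.choose 2:ℤ)))) := by ring
      _ = (q.choose 2 : ℝ) * ((n - j).choose (q - j) : ℝ) * ((n - 2).choose (q - 2) : ℝ) * c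
          * (P ^ ((q.choose 2:ℤ)) * P ^ (-a - 1)) := by rw [hpow]
      _ = (q.choose 2 : ℝ) * ((n - j).choose (q - j) : ℝ) * ((n - 2).choose (q - 2) : ℝ) * c
          / (n.choose q : ℝ) * P ^ (-a - 1) * ((n.choose q : ℝ) * P ^ ((q.choose 2:ℤ))) := by
          field_simp
  have hR : (q.choose 2 : ℝ) / ((j.choose 2:ℝ) + 2 * (q.choose 2:ℝ))
        * (((n - j).choose (q - j) : ℝ) * c * ((a : ℝ) * ((q : ℝ) * ((q : ℝ) - 1))) * P ^ (-a - 1)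
          / ((n:ℝ) * ((n:ℝ) - 1)))
      = (q.choose 2 : ℝ) * ((n - j).choose (q - j) : ℝ) * c * ((q:ℝ) * ((q:ℝ) - 1))
        / ((n:ℝ) * ((n:ℝ) - 1)) * P ^ (-a - 1) := by
    rw [haR]
    field_simp
  constructor
  · rw [hL, hR]
    congr 1
    rw [div_eq_div_iff hne3 hne2]
    linear_combination (-((q.choose 2 : ℝ) * ((n - j).choose (q - j) : ℝ) * c)) * hkey
  · rw [hL]
    have hEq : (q.choose 2 : ℝ) * ((n - j).choose (q - j) : ℝ) * ((n - 2).choose (q - 2) : ℝ) * c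
        / (n.choose q : ℝ) * P ^ (-a - 1)
        = (q.choose 2 : ℝ) / ((j.choose 2:ℝ) + 2 * (q.choose 2:ℝ))
          * (((n - j).choose (q - j) : ℝ) * c * ((a : ℝ) * ((q : ℝ) * ((q : ℝ) - 1))) * P ^ (-a - 1)
            / ((n:ℝ) * ((n:ℝ) - 1))) := by
      rw [hR]
      congr 1
      rw [div_eq_div_iff hne3 hne2]
      linear_combination (-((q.choose 2 : ℝ) * ((n - j).choose (q - j) : ℝ) * c)) * hkey
    rw [hEq]
    have hX : 0 ≤ ((n - j).choose (q - j) : ℝ) * c * ((a : ℝ) * ((q : ℝ) * ((q : ℝ) - 1))) * P ^ (-a - 1)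
        / ((n:ℝ) * ((n:ℝ) - 1)) := by
      have h1 : (0:ℝ) ≤ ((n - j).choose (q - j) : ℝ) := by positivity
      have h2 : (0:ℝ) ≤ (a:ℝ) := by rw [haR]; positivity
      have h3 : (0:ℝ) ≤ (q:ℝ) * ((q:ℝ) - 1) := by
        have : (2:ℝ) ≤ (q:ℝ) := by exact_mod_cast hq
        nlinarith
      have h4 : (0:ℝ) < P ^ (-a - 1) := zpow_pos ht _
      have h5 : (0:ℝ) < (n:ℝ) * ((n:ℝ) - 1) := by
        have : (3:ℝ) ≤ (n:ℝ) := by exact_mod_cast hn3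
        nlinarith
      exact div_nonneg (mul_nonneg (mul_nonneg (mul_nonneg h1 hc.le)
        (mul_nonneg h2 h3)) h4.le) h5.le
    have hcoef : (q.choose 2 : ℝ) / ((j.choose 2:ℝ) + 2 * (q.choose 2:ℝ)) ≤ 1 / 2 := by
      rw [div_le_div_iff₀ (by positivity) (by norm_num)]
      have : (0:ℝ) ≤ (j.choose 2 : ℝ) := by positivity
      linarith
    exact mul_le_mul_of_nonneg_right hcoef hX
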